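/- Assume (H1)-(H2), and let x_⋆ ∈ ℝⁿ satisfy x_⋆ ≤ g for all g ∈ Γ. Then R₋(+∞) is order-convex (if x, y ∈ R₋(+∞) and x ≤ z ≤ y then z ∈ R₋(+∞)) and invariant (Φ_t(R₋(+∞)) = R₋(+∞) for all t ∈ ℝ). -/

import Mathlib

open Set Metric Filter Topology Pointwise

noncomputable section

abbrev Euc (n : ℕ) := EuclideanSpace ℝ (Fin n)

/-- `Φ` is a continuous flow on `ℝⁿ`. -/
def IsFlow {n : ℕ} (Φ : ℝ → Euc n → Euc n) : Prop :=
  Continuous (fun p : ℝ × Euc n => Φ p.1 p.2) ∧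
  (∀ x, Φ 0 x = x) ∧
  (∀ t s x, Φ t (Φ s x) = Φ (t + s) x)

/-- `Cp` is a closed, solid, salient convex cone. -/
def IsConeOrder {n : ℕ} (Cp : Set (Euc n)) : Prop :=
  IsClosed Cp ∧ (∀ x ∈ Cp, ∀ y ∈ Cp, x + y ∈ Cp) ∧
  (∀ α : ℝ, 0 < α → ∀ x ∈ Cp, α • x ∈ Cp) ∧
  (interior Cp).Nonempty ∧ Cp ∩ (-Cp) = {0}

/-- `x ≤ y` iff `y - x ∈ C⁺`. -/
def coneLe {n : ℕ} (Cp : Set (Euc n)) (x y : Euc n) : Prop := y - x ∈ Cp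

/-- `x < y` iff `y - x ∈ C⁺ \ {0}`. -/
def coneLt {n : ℕ} (Cp : Set (Euc n)) (x y : Euc n) : Prop := y - x ∈ Cp ∧ y ≠ x

/-- `x ≪ y` iff `y - x ∈ Int C⁺`. -/
def coneLL {n : ℕ} (Cp : Set (Euc n)) (x y : Euc n) : Prop := y - x ∈ interior Cp

/-- `S` is unordered: no two distinct points related by `≤`. -/
def Unordered {n : ℕ} (Cp : Set (Euc n)) (S : Set (Euc n)) : Prop :=
  ∀ x ∈ S, ∀ y ∈ S, x ≠ y → ¬ coneLe Cp x y

/-- (H1): `Φ` is strongly competitive. -/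
def StronglyCompetitive {n : ℕ} (Φ : ℝ → Euc n → Euc n) (Cp : Set (Euc n)) : Prop :=
  ∀ t : ℝ, 0 < t → ∀ x y : Euc n,
    (coneLe Cp (Φ t x) (Φ t y) → coneLe Cp x y) ∧
    (coneLt Cp (Φ t x) (Φ t y) → coneLL Cp x y)

/-- `D` is invariant under the flow. -/
def Invariant {n : ℕ} (Φ : ℝ → Euc n → Euc n) (D : Set (Euc n)) : Prop :=
  ∀ t : ℝ, Φ t '' D = D

/-- (H2): `Γ` is a compact invariant attractor uniformly attracting all compact sets. -/
def Dissipative {n : ℕ} (Φ : ℝ → Euc n → Euc n) (Γ : Set (Euc n)) : Prop :=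
  Γ.Nonempty ∧ IsCompact Γ ∧ Invariant Φ Γ ∧
  ∀ N : Set (Euc n), IsCompact N → ∀ ε > 0, ∃ T : ℝ, ∀ t ≥ T, ∀ x ∈ N,
    Metric.infDist (Φ t x) Γ < ε

/-- The ω-limit set of `x`. -/
def omegaSet {n : ℕ} (Φ : ℝ → Euc n → Euc n) (x : Euc n) : Set (Euc n) :=
  ⋂ t ∈ Ici (0 : ℝ), closure ((fun τ => Φ τ x) '' Ici t)

/-- The α-limit set of `x`. -/
def alphaSet {n : ℕ} (Φ : ℝ → Euc n → Euc n) (x : Euc n) : Set (Euc n) :=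
  ⋂ t ∈ Iic (0 : ℝ), closure ((fun τ => Φ τ x) '' Iic t)

/-- The set `R(Φ)` of recurrent points. -/
def recurrentSet {n : ℕ} (Φ : ℝ → Euc n → Euc n) : Set (Euc n) :=
  {x | x ∈ omegaSet Φ x}

/-- The Birkhoff center `𝓑(Φ)`. -/
def birkhoffCenter {n : ℕ} (Φ : ℝ → Euc n → Euc n) : Set (Euc n) :=
  closure (recurrentSet Φ)

/-- The set `E` of equilibria. -/
def equilibria {n : ℕ} (Φ : ℝ → Euc n → Euc n) : Set (Euc n) :=
  {p | ∀ t : ℝ, Φ t p = p}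

/-- `C = C⁺ ∪ (−C⁺)`. -/
def coneC {n : ℕ} (Cp : Set (Euc n)) : Set (Euc n) := Cp ∪ (-Cp)

/-- `K = closure(ℝⁿ \ C)`. -/
def coneK {n : ℕ} (Cp : Set (Euc n)) : Set (Euc n) := closure ((coneC Cp)ᶜ)

/-- The translated cone `C_x = x + C`. -/
def coneCAt {n : ℕ} (Cp : Set (Euc n)) (x : Euc n) : Set (Euc n) := {y | y - x ∈ coneC Cp}

/-- The translated complementary cone `K_x = x + K`. -/
def coneKAt {n : ℕ} (Cp : Set (Euc n)) (x : Euc n) : Set (Euc n) := {y | y - x ∈ coneK Cp}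


/-- The lower boundary `∂₋S`. -/
def lowerBdry {n : ℕ} (Cp : Set (Euc n)) (S : Set (Euc n)) : Set (Euc n) :=
  {z | (∃ u : ℕ → Euc n, (∀ i, u i ∈ S) ∧ Filter.Tendsto u Filter.atTop (nhds z) ∧
          ∀ i, coneLL Cp z (u i)) ∧
       ¬ ∃ v : ℕ → Euc n, (∀ i, v i ∈ S) ∧ Filter.Tendsto v Filter.atTop (nhds z) ∧
          ∀ i, coneLL Cp (v i) z}

/-- The upper boundary `∂₊S`. -/
def upperBdry {n : ℕ} (Cp : Set (Euc n)) (S : Set (Euc n)) : Set (Euc n) :=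
  {z | (∃ v : ℕ → Euc n, (∀ i, v i ∈ S) ∧ Filter.Tendsto v Filter.atTop (nhds z) ∧
          ∀ i, coneLL Cp (v i) z) ∧
       ¬ ∃ u : ℕ → Euc n, (∀ i, u i ∈ S) ∧ Filter.Tendsto u Filter.atTop (nhds z) ∧
          ∀ i, coneLL Cp z (u i)}

/-- The basin of repulsion `R(q)`. -/
def basinRep {n : ℕ} (Φ : ℝ → Euc n → Euc n) (q : Euc n) : Set (Euc n) :=
  {x | Filter.Tendsto (fun t : ℝ => Φ (-t) x) Filter.atTop (nhds q)}

/-- The basin of lower repulsion `R₋(q)`. -/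
def basinRepLower {n : ℕ} (Φ : ℝ → Euc n → Euc n) (Cp : Set (Euc n)) (q : Euc n) :
    Set (Euc n) :=
  {x ∈ basinRep Φ q | ∃ T : ℝ, 0 < T ∧ ∀ t ≥ T, coneLL Cp (Φ (-t) x) q}

/-- The basin of upper repulsion `R₊(q)`. -/
def basinRepUpper {n : ℕ} (Φ : ℝ → Euc n → Euc n) (Cp : Set (Euc n)) (q : Euc n) :
    Set (Euc n) :=
  {x ∈ basinRep Φ q | ∃ T : ℝ, 0 < T ∧ ∀ t ≥ T, coneLL Cp q (Φ (-t) x)}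

/-- `M₋(q) = ∂₋R₋(q)`. -/
def Mminus {n : ℕ} (Φ : ℝ → Euc n → Euc n) (Cp : Set (Euc n)) (q : Euc n) : Set (Euc n) :=
  lowerBdry Cp (basinRepLower Φ Cp q)

/-- `M₊(p) = ∂₊R₊(p)`. -/
def Mplus {n : ℕ} (Φ : ℝ → Euc n → Euc n) (Cp : Set (Euc n)) (p : Euc n) : Set (Euc n) :=
  upperBdry Cp (basinRepUpper Φ Cp p)

/-- `R(∞) = {x : |Φ_{−t}(x)| → ∞}`. -/
def repInfty {n : ℕ} (Φ : ℝ → Euc n → Euc n) : Set (Euc n) :=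
  {x | Filter.Tendsto (fun t : ℝ => ‖Φ (-t) x‖) Filter.atTop Filter.atTop}

/-- `R₋(+∞) = Int R̃₋(+∞)`. -/
def RminusInfty {n : ℕ} (Φ : ℝ → Euc n → Euc n) (Cp : Set (Euc n)) (xlo : Euc n) :
    Set (Euc n) :=
  interior {x ∈ repInfty Φ | ∃ T : ℝ, 0 < T ∧ ∀ t ≥ T, coneLL Cp xlo (Φ (-t) x)}

/-- `M₋(+∞) = ∂₋R₋(+∞)`. -/
def MminusInfty {n : ℕ} (Φ : ℝ → Euc n → Euc n) (Cp : Set (Euc n)) (xlo : Euc n) :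
    Set (Euc n) :=
  lowerBdry Cp (RminusInfty Φ Cp xlo)

/-- `R₊(−∞) = Int R̃₊(−∞)`. -/
def RplusInfty {n : ℕ} (Φ : ℝ → Euc n → Euc n) (Cp : Set (Euc n)) (xhi : Euc n) :
    Set (Euc n) :=
  interior {x ∈ repInfty Φ | ∃ T : ℝ, 0 < T ∧ ∀ t ≥ T, coneLL Cp (Φ (-t) x) xhi}

/-- `M₊(−∞) = ∂₊R₊(−∞)`. -/
def MplusInfty {n : ℕ} (Φ : ℝ → Euc n → Euc n) (Cp : Set (Euc n)) (xhi : Euc n) :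
    Set (Euc n) :=
  upperBdry Cp (RplusInfty Φ Cp xhi)

section MyAux

variable {n : ℕ}

lemma my_flow_cancel {Φ : ℝ → Euc n → Euc n} (hΦ : IsFlow Φ) (t : ℝ) (x : Euc n) :
    Φ t (Φ (-t) x) = x := by
  rw [hΦ.2.2, add_neg_cancel, hΦ.2.1]

lemma my_flow_cancel' {Φ : ℝ → Euc n → Euc n} (hΦ : IsFlow Φ) (t : ℝ) (x : Euc n) :
    Φ (-t) (Φ t x) = x := by
  rw [hΦ.2.2, neg_add_cancel, hΦ.2.1]

lemma my_cone_int_add {Cp : Set (Euc n)} (hC : IsConeOrder Cp)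
    {a b : Euc n} (ha : a ∈ interior Cp) (hb : b ∈ Cp) : a + b ∈ interior Cp := by
  obtain ⟨U, hU, hUo, haU⟩ := mem_interior.mp ha
  apply mem_interior.mpr
  refine ⟨(fun y => y + b) '' U, ?_, ?_, ⟨a, haU, rfl⟩⟩
  · rintro _ ⟨y, hy, rfl⟩; exact hC.2.1 y (hU hy) b hb
  · exact (Homeomorph.addRight b).isOpenMap U hUo

lemma my_cone_int_smul {Cp : Set (Euc n)} (hC : IsConeOrder Cp)
    {δ : ℝ} (hδ : 0 < δ) {e : Euc n} (he : e ∈ interior Cp) : δ • e ∈ interior Cp := by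
  obtain ⟨U, hU, hUo, haU⟩ := mem_interior.mp he
  apply mem_interior.mpr
  refine ⟨(fun y => δ • y) '' U, ?_, ?_, ⟨e, haU, rfl⟩⟩
  · rintro _ ⟨y, hy, rfl⟩; exact hC.2.2.1 δ hδ y (hU hy)
  · exact (isOpenMap_smul₀ (G₀ := ℝ) (ne_of_gt hδ)) U hUo

lemma my_cone_normal {Cp : Set (Euc n)} (hC : IsConeOrder Cp) :
    ∃ K : ℝ, 0 < K ∧ ∀ u v : Euc n, u ∈ Cp → v - u ∈ Cp → ‖u‖ ≤ K * ‖v‖ := by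
  by_contra h
  push_neg at h
  have hpick : ∀ k : ℕ, ∃ u v : Euc n, u ∈ Cp ∧ v - u ∈ Cp ∧ ((k : ℝ) + 1) * ‖v‖ < ‖u‖ := by
    intro k
    obtain ⟨u, v, hu, hvu, hlt⟩ := h ((k : ℝ) + 1) (by positivity)
    exact ⟨u, v, hu, hvu, hlt⟩
  choose u v hu hvu hlt using hpick
  have hune : ∀ k, u k ≠ 0 := by
    intro k hk0
    have := hlt k
    rw [hk0, norm_zero] at this
    nlinarith [norm_nonneg (v k)]
  have hupos : ∀ k, 0 < ‖u k‖ := fun k => norm_pos_iff.mpr (hune k)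
  let w : ℕ → Euc n := fun k => (‖u k‖)⁻¹ • u k
  let s : ℕ → Euc n := fun k => (‖u k‖)⁻¹ • v k
  have hwS : ∀ k, w k ∈ Metric.sphere (0 : Euc n) 1 := by
    intro k
    show (‖u k‖)⁻¹ • u k ∈ Metric.sphere (0 : Euc n) 1
    rw [Metric.mem_sphere, dist_zero_right, norm_smul, Real.norm_eq_abs,
      abs_of_pos (inv_pos.mpr (hupos k)), inv_mul_cancel₀ (ne_of_gt (hupos k))]
  have hwC : ∀ k, w k ∈ Cp := fun k => hC.2.2.1 _ (inv_pos.mpr (hupos k)) _ (hu k)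
  have hswC : ∀ k, s k - w k ∈ Cp := by
    intro k
    show (‖u k‖)⁻¹ • v k - (‖u k‖)⁻¹ • u k ∈ Cp
    rw [← smul_sub]
    exact hC.2.2.1 _ (inv_pos.mpr (hupos k)) _ (hvu k)
  obtain ⟨x, hxS, φ, hφ, hconv⟩ :=
    (isCompact_sphere (0 : Euc n) 1).tendsto_subseq (fun k => hwS k)
  have hxC : x ∈ Cp := hC.1.mem_of_tendsto hconv (Filter.Eventually.of_forall fun k => hwC _)
  have hsnorm : ∀ k, ‖s k‖ < ((k : ℝ) + 1)⁻¹ := by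
    intro k
    have h1 : ((k : ℝ) + 1) * ‖v k‖ < ‖u k‖ := hlt k
    have h2 : ‖s k‖ = ‖v k‖ / ‖u k‖ := by
      show ‖(‖u k‖)⁻¹ • v k‖ = _
      rw [norm_smul, Real.norm_eq_abs, abs_of_pos (inv_pos.mpr (hupos k)), inv_mul_eq_div]
    rw [h2, div_lt_iff₀ (hupos k), inv_mul_eq_div, lt_div_iff₀ (by positivity)]
    linarith [mul_comm (‖v k‖) ((k:ℝ)+1)]
  have hs0 : Filter.Tendsto (fun k => s (φ k)) Filter.atTop (nhds 0) := by
    rw [tendsto_zero_iff_norm_tendsto_zero]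
    apply squeeze_zero (fun k => norm_nonneg _) (fun k => le_of_lt (hsnorm (φ k)))
    have h1 : Filter.Tendsto (fun k : ℕ => ((k : ℝ) + 1)⁻¹) Filter.atTop (nhds 0) := by
      apply tendsto_inv_atTop_zero.comp
      exact Filter.tendsto_atTop_add_const_right _ 1 tendsto_natCast_atTop_atTop
    apply squeeze_zero (fun k => by positivity) ?_ h1
    intro k
    apply inv_anti₀ (by positivity)
    have := (StrictMono.le_apply hφ : k ≤ φ k)
    exact_mod_cast by push_cast; linarith [(Nat.cast_le (α := ℝ)).mpr this]
  have hnx : -x ∈ Cp := by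
    have : Filter.Tendsto (fun k => s (φ k) - w (φ k)) Filter.atTop (nhds (0 - x)) :=
      hs0.sub hconv
    rw [zero_sub] at this
    exact hC.1.mem_of_tendsto this (Filter.Eventually.of_forall fun k => hswC _)
  have hx0 : x = 0 := by
    have : x ∈ Cp ∩ (-Cp) := ⟨hxC, by simpa using hnx⟩
    rw [hC.2.2.2.2] at this
    simpa using this
  rw [hx0] at hxS
  simp at hxS

lemma my_back_mono {Φ : ℝ → Euc n → Euc n} {Cp : Set (Euc n)} (hΦ : IsFlow Φ)
    (hcomp : StronglyCompetitive Φ Cp) {t : ℝ} (ht : 0 < t) {x z : Euc n}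
    (h : coneLe Cp x z) : coneLe Cp (Φ (-t) x) (Φ (-t) z) := by
  apply (hcomp t ht (Φ (-t) x) (Φ (-t) z)).1
  unfold coneLe at *
  rw [my_flow_cancel hΦ, my_flow_cancel hΦ]
  exact h

/-- The underlying set of `RminusInfty`, upward closed. -/
lemma my_Stil_up {Φ : ℝ → Euc n → Euc n} {Cp : Set (Euc n)} (hΦ : IsFlow Φ)
    (hC : IsConeOrder Cp) (hcomp : StronglyCompetitive Φ Cp) (xlo : Euc n)
    {w z : Euc n}
    (hw : w ∈ {x ∈ repInfty Φ | ∃ T : ℝ, 0 < T ∧ ∀ t ≥ T, coneLL Cp xlo (Φ (-t) x)})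
    (hwz : coneLe Cp w z) :
    z ∈ {x ∈ repInfty Φ | ∃ T : ℝ, 0 < T ∧ ∀ t ≥ T, coneLL Cp xlo (Φ (-t) x)} := by
  obtain ⟨hwR, T, hT, hTw⟩ := hw
  obtain ⟨K, hK, hKb⟩ := my_cone_normal hC
  set T' := max T 1 with hT'
  have hT'pos : (0:ℝ) < T' := lt_of_lt_of_le one_pos (le_max_right _ _)
  have key : ∀ t ≥ T', (Φ (-t) z - xlo) - (Φ (-t) w - xlo) ∈ Cp ∧
      Φ (-t) w - xlo ∈ interior Cp := by
    intro t ht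
    have ht0 : 0 < t := lt_of_lt_of_le hT'pos ht
    have h1 : coneLe Cp (Φ (-t) w) (Φ (-t) z) := my_back_mono hΦ hcomp ht0 hwz
    refine ⟨?_, hTw t (le_trans (le_max_left _ _) ht)⟩
    simpa [coneLe, sub_sub_sub_cancel_right] using h1
  constructor
  · -- z ∈ repInfty
    have hgoal : Filter.Tendsto (fun t : ℝ => ‖Φ (-t) z‖) Filter.atTop Filter.atTop := by
      have hle : (fun t : ℝ => (‖Φ (-t) w‖ - ‖xlo‖) / K - ‖xlo‖) ≤ᶠ[Filter.atTop]
          (fun t : ℝ => ‖Φ (-t) z‖) := by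
        rw [Filter.EventuallyLE, Filter.eventually_atTop]
        refine ⟨T', fun t ht => ?_⟩
        obtain ⟨hc1, hc2⟩ := key t ht
        have hb := hKb _ _ (interior_subset hc2) hc1
        have e1 : ‖Φ (-t) w‖ - ‖xlo‖ ≤ ‖Φ (-t) w - xlo‖ := norm_sub_norm_le _ _
        have e2 : ‖Φ (-t) z - xlo‖ ≤ ‖Φ (-t) z‖ + ‖xlo‖ := norm_sub_le _ _
        have e3 : (‖Φ (-t) w‖ - ‖xlo‖) / K ≤ ‖Φ (-t) z‖ + ‖xlo‖ := by
          rw [div_le_iff₀ hK]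
          nlinarith
        linarith
      have h1 : Filter.Tendsto (fun t : ℝ => ‖Φ (-t) w‖ - ‖xlo‖) Filter.atTop Filter.atTop := by
        simpa [sub_eq_add_neg] using
          Filter.tendsto_atTop_add_const_right Filter.atTop (-‖xlo‖) hwR
      have h2 := h1.atTop_div_const hK
      have h3 : Filter.Tendsto (fun t : ℝ => (‖Φ (-t) w‖ - ‖xlo‖) / K - ‖xlo‖)
          Filter.atTop Filter.atTop := by
        simpa [sub_eq_add_neg] using
          Filter.tendsto_atTop_add_const_right Filter.atTop (-‖xlo‖) h2
      exact tendsto_atTop_mono' Filter.atTop hle h3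
    exact hgoal
  · refine ⟨T', hT'pos, fun t ht => ?_⟩
    obtain ⟨hc1, hc2⟩ := key t ht
    have := my_cone_int_add hC hc2 hc1
    simpa [coneLL] using this

lemma my_Stil_mapsto {Φ : ℝ → Euc n → Euc n} {Cp : Set (Euc n)} (hΦ : IsFlow Φ)
    (xlo : Euc n) (s : ℝ) {x : Euc n}
    (hx : x ∈ {x ∈ repInfty Φ | ∃ T : ℝ, 0 < T ∧ ∀ t ≥ T, coneLL Cp xlo (Φ (-t) x)}) :
    Φ s x ∈ {x ∈ repInfty Φ | ∃ T : ℝ, 0 < T ∧ ∀ t ≥ T, coneLL Cp xlo (Φ (-t) x)} := by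
  obtain ⟨hxR, T, hT, hTw⟩ := hx
  have hflow : ∀ t : ℝ, Φ (-t) (Φ s x) = Φ (-(t - s)) x := by
    intro t
    rw [hΦ.2.2]
    congr 1
    ring
  constructor
  · have h1 : Filter.Tendsto (fun t : ℝ => t - s) Filter.atTop Filter.atTop := by
      simpa [sub_eq_add_neg] using
        Filter.tendsto_atTop_add_const_right Filter.atTop (-s) Filter.tendsto_id
    have := hxR.comp h1
    simp only [repInfty, mem_setOf_eq] at this ⊢
    convert this using 2 with t
    rw [hflow t]
    rfl
  · refine ⟨max (T + s) 1, lt_of_lt_of_le one_pos (le_max_right _ _), fun t ht => ?_⟩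
    have : t - s ≥ T := by
      have := le_trans (le_max_left (T + s) 1) ht
      linarith
    rw [hflow t]
    exact hTw (t - s) this

def my_flowHomeo {Φ : ℝ → Euc n → Euc n} (hΦ : IsFlow Φ) (s : ℝ) : Euc n ≃ₜ Euc n where
  toFun := Φ s
  invFun := Φ (-s)
  left_inv := fun x => my_flow_cancel' hΦ s x
  right_inv := fun x => my_flow_cancel hΦ s x
  continuous_toFun := hΦ.1.comp (continuous_const.prodMk continuous_id)
  continuous_invFun := hΦ.1.comp (continuous_const.prodMk continuous_id)

end MyAux

theorem stmt12 {n : ℕ} (Φ : ℝ → Euc n → Euc n) (Cp Γ : Set (Euc n))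
    (hΦ : IsFlow Φ) (hC : IsConeOrder Cp) (hcomp : StronglyCompetitive Φ Cp)
    (hΓ : Dissipative Φ Γ)
    (xlo : Euc n) (hlo : ∀ g ∈ Γ, coneLe Cp xlo g) :
    (∀ x ∈ RminusInfty Φ Cp xlo, ∀ y ∈ RminusInfty Φ Cp xlo, ∀ z : Euc n,
      coneLe Cp x z → coneLe Cp z y → z ∈ RminusInfty Φ Cp xlo) ∧
    Invariant Φ (RminusInfty Φ Cp xlo) := by
  set S := {x ∈ repInfty Φ | ∃ T : ℝ, 0 < T ∧ ∀ t ≥ T, coneLL Cp xlo (Φ (-t) x)} with hSdef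
  have hR : RminusInfty Φ Cp xlo = interior S := rfl
  constructor
  · intro x hx y hy z hxz hzy
    rw [hR] at hx ⊢
    obtain ⟨ε, hε, hball⟩ := Metric.mem_nhds_iff.mp (mem_interior_iff_mem_nhds.mp hx)
    obtain ⟨e, he⟩ := hC.2.2.2.1
    set δ := ε / (2 * (‖e‖ + 1)) with hδdef
    have hδ : 0 < δ := by positivity
    have hxδ : x - δ • e ∈ S := by
      apply hball
      rw [Metric.mem_ball, dist_eq_norm]
      have heq : x - δ • e - x = -(δ • e) := by abel
      rw [heq, norm_neg, norm_smul, Real.norm_eq_abs, abs_of_pos hδ]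
      rw [hδdef, div_mul_eq_mul_div, div_lt_iff₀ (by positivity)]
      nlinarith [norm_nonneg e]
    have hδe : δ • e ∈ interior Cp := my_cone_int_smul hC hδ he
    obtain ⟨ρ, hρ, hballρ⟩ := Metric.isOpen_iff.mp isOpen_interior _ hδe
    apply mem_interior_iff_mem_nhds.mpr
    apply Metric.mem_nhds_iff.mpr
    refine ⟨ρ, hρ, fun z' hz' => ?_⟩
    have h1 : (z' - z) + δ • e ∈ interior Cp := by
      apply hballρ
      rw [Metric.mem_ball, dist_eq_norm]
      have heq : z' - z + δ • e - δ • e = z' - z := by abel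
      rw [heq]
      exact mem_ball_iff_norm.mp hz'
    have h2 : coneLe Cp (x - δ • e) z' := by
      have h3 := my_cone_int_add hC h1 hxz
      have heq : (z' - z + δ • e) + (z - x) = z' - (x - δ • e) := by abel
      rw [heq] at h3
      exact interior_subset h3
    exact my_Stil_up hΦ hC hcomp xlo hxδ h2
  · intro s
    have himg : Φ s '' S = S := by
      apply Set.Subset.antisymm
      · rintro _ ⟨x, hx, rfl⟩
        exact my_Stil_mapsto hΦ xlo s hx
      · intro x hx
        exact ⟨Φ (-s) x, my_Stil_mapsto hΦ xlo (-s) hx, my_flow_cancel hΦ s x⟩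
    show Φ s '' interior S = interior S
    calc Φ s '' interior S = (my_flowHomeo hΦ s) '' interior S := rfl
      _ = interior ((my_flowHomeo hΦ s) '' S) := (my_flowHomeo hΦ s).image_interior S
      _ = interior (Φ s '' S) := rfl
      _ = interior S := by rw [himg]
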